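/- End-to-end information-theoretic bound for the Gaussian mean estimation example: Let Z_{i,k}, for i = 1, ..., n and k = 1, ..., K, be i.i.d. d-dimensional Gaussian random vectors with distribution N(μ, σ²I_d) for σ > 0, let the loss be ℓ(w, z) = ‖w − z‖₂², and let Ŵ be the mean of all nK samples. Then the expected generalization error satisfies E[Δ_A(S)] ≤ σ²d·√(2(1 + 1/(nK))²·log(nK/(nK−1))). -/

import Mathlib

open MeasureTheory ProbabilityTheory
open scoped ENNReal NNReal

section PiAux
variable {ι : Type*} [Fintype ι] {E : Type*} [MeasurableSpace E]
variable (μ : ι → Measure E) [∀ i, IsProbabilityMeasure (μ i)]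

lemma gma_map_eval (a : ι) : (Measure.pi μ).map (fun x => x a) = μ a := by
  classical
  ext s hs
  rw [Measure.map_apply (measurable_pi_apply a) hs]
  have h0 : (fun x : ι → E => x a) ⁻¹' s
      = Set.univ.pi (Function.update (fun _ => Set.univ) a s) := Set.eval_preimage
  rw [h0, Measure.pi_pi]
  have h1 : (fun i => μ i (Function.update (fun _ => Set.univ) a s i))
      = Function.update (fun i => μ i Set.univ) a (μ a s) := by
    funext i
    by_cases h : i = a
    · subst h; simp
    · simp [Function.update_of_ne h]
  rw [h1, Finset.prod_update_of_mem (Finset.mem_univ a)]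
  simp

lemma gma_mp_eval (a : ι) :
    MeasurePreserving (fun x : ι → E => x a) (Measure.pi μ) (μ a) :=
  ⟨measurable_pi_apply a, gma_map_eval μ a⟩

lemma gma_map_pair {a b : ι} (hab : a ≠ b) :
    (Measure.pi μ).map (fun x => (x a, x b)) = (μ a).prod (μ b) := by
  classical
  refine (Measure.prod_eq fun s t hs ht => ?_).symm
  rw [Measure.map_apply ((measurable_pi_apply a).prodMk (measurable_pi_apply b)) (hs.prod ht)]
  have hpre : (fun x : ι → E => (x a, x b)) ⁻¹' (s ×ˢ t)
      = Set.univ.pi (Function.update (Function.update (fun _ => Set.univ) a s) b t) := by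
    ext x
    simp only [Set.mem_preimage, Set.mem_prod, Set.mem_pi, Set.mem_univ, forall_true_left]
    constructor
    · rintro ⟨h1, h2⟩ i
      by_cases hib : i = b
      · subst hib; simpa using h2
      by_cases hia : i = a
      · subst hia; simpa [Function.update_of_ne hab] using h1
      · simp [Function.update_of_ne hib, Function.update_of_ne hia]
    · intro h
      exact ⟨by simpa [Function.update_of_ne hab] using h a, by simpa using h b⟩
  rw [hpre, Measure.pi_pi]
  have h1 : (fun i => μ i (Function.update (Function.update (fun _ => Set.univ) a s) b t i))
      = Function.update (Function.update (fun i => μ i Set.univ) a (μ a s)) b (μ b t) := by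
    funext i
    by_cases hib : i = b
    · subst hib; simp
    by_cases hia : i = a
    · subst hia; simp [Function.update_of_ne hab, Function.update_of_ne hib]
    · simp [Function.update_of_ne hib, Function.update_of_ne hia]
  rw [h1, Finset.prod_update_of_mem (Finset.mem_univ b)]
  rw [Finset.prod_update_of_mem (by simp [hab] : a ∈ Finset.univ \ {b})]
  simp [mul_comm]

lemma gma_mp_pair {a b : ι} (hab : a ≠ b) :
    MeasurePreserving (fun x : ι → E => (x a, x b)) (Measure.pi μ) ((μ a).prod (μ b)) :=
  ⟨(measurable_pi_apply a).prodMk (measurable_pi_apply b), gma_map_pair μ hab⟩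

end PiAux

lemma gma_integral_comp {α β : Type*} [MeasurableSpace α] [MeasurableSpace β]
    {μ : Measure α} {ν : Measure β} {f : α → β} (h : MeasurePreserving f μ ν)
    {g : β → ℝ} (hg : AEStronglyMeasurable g ν) :
    ∫ x, g (f x) ∂μ = ∫ y, g y ∂ν := by
  rw [← h.map_eq] at hg ⊢
  exact (integral_map h.measurable.aemeasurable hg).symm
open MeasureTheory ProbabilityTheory Real
open scoped ENNReal NNReal

section OneDim
variable {v : ℝ≥0}

lemma gma_pdf0_eq (v : ℝ≥0) (x : ℝ) :
    gaussianPDFReal 0 v x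
      = (Real.sqrt (2 * π * v))⁻¹ * Real.exp (-(((2:ℝ) * v)⁻¹) * x ^ 2) := by
  rw [gaussianPDFReal]
  congr 1
  congr 1
  ring

lemma gma_pdf0_even (v : ℝ≥0) (x : ℝ) :
    gaussianPDFReal 0 v (-x) = gaussianPDFReal 0 v x := by
  rw [gma_pdf0_eq, gma_pdf0_eq, neg_pow]
  ring_nf

lemma gma_vpos (hv : v ≠ 0) : (0:ℝ) < v := by
  exact_mod_cast pos_iff_ne_zero.mpr hv

lemma gma_integrable_pow_pdf0 (hv : v ≠ 0) (k : ℕ) :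
    Integrable (fun x : ℝ => x ^ k * gaussianPDFReal 0 v x) := by
  have hv' := gma_vpos hv
  have hb : 0 < ((2:ℝ)*v)⁻¹ := by positivity
  have hs : (-1:ℝ) < (k:ℝ) := lt_of_lt_of_le (by norm_num) (Nat.cast_nonneg k)
  have h := (integrable_rpow_mul_exp_neg_mul_sq hb hs).const_mul ((Real.sqrt (2*π*v))⁻¹)
  have heq : (fun x : ℝ => x ^ k * gaussianPDFReal 0 v x)
      = fun x : ℝ => (Real.sqrt (2*π*v))⁻¹ * (x ^ (k:ℝ) * Real.exp (-((2:ℝ)*v)⁻¹ * x ^ 2)) := by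
    funext x
    rw [Real.rpow_natCast, gma_pdf0_eq]
    ring
  rw [heq]
  exact h

lemma gma_integral_id_pdf0 (v : ℝ≥0) : ∫ x : ℝ, x * gaussianPDFReal 0 v x = 0 := by
  have h := integral_neg_eq_self (fun x : ℝ => x * gaussianPDFReal 0 v x) volume
  have h2 : (fun x : ℝ => (-x) * gaussianPDFReal 0 v (-x))
      = fun x : ℝ => -(x * gaussianPDFReal 0 v x) := by
    funext x; rw [gma_pdf0_even]; ring
  rw [h2] at h
  rw [integral_neg] at h
  linarith

lemma gma_integral_sq_pdf0 (hv : v ≠ 0) : ∫ x : ℝ, x ^ 2 * gaussianPDFReal 0 v x = v := by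
  have hv' := gma_vpos hv
  have hb : 0 < ((2:ℝ)*v)⁻¹ := by positivity
  have hpdfabs : ∀ x : ℝ, gaussianPDFReal 0 v |x| = gaussianPDFReal 0 v x := by
    intro x
    rcases abs_choice x with h | h
    · rw [h]
    · rw [h, gma_pdf0_even]
  have hmain : ∫ x : ℝ, x ^ 2 * gaussianPDFReal 0 v x
      = 2 * ∫ x in Set.Ioi (0:ℝ), x ^ 2 * gaussianPDFReal 0 v x := by
    rw [← integral_comp_abs (f := fun t : ℝ => t ^ 2 * gaussianPDFReal 0 v t)]
    congr 1
    funext x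
    simp only [sq_abs, hpdfabs]
  rw [hmain]
  have h2 : ∀ x : ℝ, x ^ (2:ℝ) = x ^ 2 := fun x => by
    rw [show (2:ℝ) = ((2:ℕ):ℝ) by norm_num, Real.rpow_natCast]
  have hset : ∫ x in Set.Ioi (0:ℝ), x ^ 2 * gaussianPDFReal 0 v x
      = (Real.sqrt (2*π*v))⁻¹ * ∫ x in Set.Ioi (0:ℝ),
          x ^ (2:ℝ) * Real.exp (-((2:ℝ)*v)⁻¹ * x ^ (2:ℝ)) := by
    rw [← integral_const_mul]
    refine setIntegral_congr_fun measurableSet_Ioi (fun x _ => ?_)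
    rw [h2, gma_pdf0_eq]
    ring
  rw [hset, integral_rpow_mul_exp_neg_mul_rpow (by norm_num) (by norm_num) hb]
  rw [show (-((2:ℝ)+1)/2) = -(3/2 : ℝ) by norm_num, show (((2:ℝ)+1)/2) = 1/2 + 1 by norm_num,
    Real.Gamma_add_one (by norm_num), Real.Gamma_one_half_eq]
  rw [Real.rpow_neg (le_of_lt hb), Real.inv_rpow (by positivity)]
  rw [inv_inv]
  rw [show (3/2:ℝ) = 1 + 1/2 by norm_num, Real.rpow_add (by positivity), Real.rpow_one,
    ← Real.sqrt_eq_rpow]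
  rw [show 2 * π * (v:ℝ) = (2*v) * π by ring, Real.sqrt_mul (by positivity)]
  have hs1 : (0:ℝ) < Real.sqrt (2*v) := Real.sqrt_pos.mpr (by positivity)
  have hs2 : (0:ℝ) < Real.sqrt π := Real.sqrt_pos.mpr Real.pi_pos
  field_simp
end OneDim

section GaussReal
variable {v : ℝ≥0} {c : ℝ}

lemma gma_integral_gaussianReal (hv : v ≠ 0) (c : ℝ) (g : ℝ → ℝ) :
    ∫ t, g t ∂(gaussianReal c v) = ∫ x, gaussianPDFReal c v x * g x := by
  rw [gaussianReal_of_var_ne_zero c hv]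
  have hd : gaussianPDF c v = fun x => ((Real.toNNReal (gaussianPDFReal c v x) : ℝ≥0) : ℝ≥0∞) :=
    rfl
  rw [hd, integral_withDensity_eq_integral_smul
    ((measurable_gaussianPDFReal c v).real_toNNReal) g]
  congr 1
  funext x
  rw [NNReal.smul_def, Real.coe_toNNReal _ (gaussianPDFReal_nonneg _ _ _), smul_eq_mul]

lemma gma_integrable_gaussianReal_iff (hv : v ≠ 0) (c : ℝ) (g : ℝ → ℝ) :
    Integrable g (gaussianReal c v)
      ↔ Integrable (fun x => gaussianPDFReal c v x * g x) volume := by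
  rw [gaussianReal_of_var_ne_zero c hv]
  have hd : gaussianPDF c v = fun x => ((Real.toNNReal (gaussianPDFReal c v x) : ℝ≥0) : ℝ≥0∞) :=
    rfl
  rw [hd, integrable_withDensity_iff_integrable_smul
    ((measurable_gaussianPDFReal c v).real_toNNReal)]
  constructor <;> intro h <;> refine h.congr (Filter.Eventually.of_forall fun x => ?_) <;>
    simp [NNReal.smul_def, Real.coe_toNNReal _ (gaussianPDFReal_nonneg c v x)]

lemma gma_pdf_shift (c : ℝ) (x : ℝ) (v : ℝ≥0) :
    gaussianPDFReal c v x = gaussianPDFReal 0 v (x - c) := by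
  rw [gaussianPDFReal_sub, zero_add]

lemma gma_integrable_sub (hv : v ≠ 0) (c : ℝ) :
    Integrable (fun t : ℝ => t - c) (gaussianReal c v) := by
  rw [gma_integrable_gaussianReal_iff hv]
  have h0 : Integrable (fun y : ℝ => gaussianPDFReal 0 v y * y) := by
    have := gma_integrable_pow_pdf0 hv 1
    simpa [mul_comm] using this
  have := h0.comp_sub_right c
  refine this.congr (Filter.Eventually.of_forall fun x => ?_)
  simp only []
  rw [← gma_pdf_shift]

lemma gma_integral_sub (hv : v ≠ 0) (c : ℝ) :
    ∫ t, (t - c) ∂(gaussianReal c v) = 0 := by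
  rw [gma_integral_gaussianReal hv]
  have h1 : (fun x : ℝ => gaussianPDFReal c v x * (x - c))
      = fun x => (fun y : ℝ => gaussianPDFReal 0 v y * y) (x - c) := by
    funext x; rw [gma_pdf_shift]
  rw [h1, integral_sub_right_eq_self (fun y : ℝ => gaussianPDFReal 0 v y * y) c]
  simpa [mul_comm] using gma_integral_id_pdf0 (v := v)

lemma gma_integrable_sub_sq (hv : v ≠ 0) (c : ℝ) :
    Integrable (fun t : ℝ => (t - c) ^ 2) (gaussianReal c v) := by
  rw [gma_integrable_gaussianReal_iff hv]
  have h0 : Integrable (fun y : ℝ => gaussianPDFReal 0 v y * y ^ 2) := by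
    have := gma_integrable_pow_pdf0 hv 2
    simpa [mul_comm] using this
  have := h0.comp_sub_right c
  refine this.congr (Filter.Eventually.of_forall fun x => ?_)
  simp only []
  rw [← gma_pdf_shift]

lemma gma_integral_sub_sq (hv : v ≠ 0) (c : ℝ) :
    ∫ t, (t - c) ^ 2 ∂(gaussianReal c v) = v := by
  rw [gma_integral_gaussianReal hv]
  have h1 : (fun x : ℝ => gaussianPDFReal c v x * (x - c) ^ 2)
      = fun x => (fun y : ℝ => gaussianPDFReal 0 v y * y ^ 2) (x - c) := by
    funext x; rw [gma_pdf_shift]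
  rw [h1, integral_sub_right_eq_self (fun y : ℝ => gaussianPDFReal 0 v y * y ^ 2) c]
  simpa [mul_comm] using gma_integral_sq_pdf0 hv

lemma gma_integrable_shift_sq (hv : v ≠ 0) (c w : ℝ) :
    Integrable (fun t : ℝ => (w - t) ^ 2) (gaussianReal c v) := by
  have h : (fun t : ℝ => (w - t) ^ 2)
      = fun t => (t - c) ^ 2 - (2 * (w - c)) * (t - c) + (w - c) ^ 2 := by
    funext t; ring
  rw [h]
  exact (((gma_integrable_sub_sq hv c).sub ((gma_integrable_sub hv c).const_mul _)).add
    (integrable_const _))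

lemma gma_integral_shift_sq (hv : v ≠ 0) (c w : ℝ) :
    ∫ t, (w - t) ^ 2 ∂(gaussianReal c v) = (w - c) ^ 2 + v := by
  have h : (fun t : ℝ => (w - t) ^ 2)
      = fun t => (t - c) ^ 2 - (2 * (w - c)) * (t - c) + (w - c) ^ 2 := by
    funext t; ring
  have hf1 : Integrable (fun t : ℝ => (t - c) ^ 2 - 2 * (w - c) * (t - c)) (gaussianReal c v) :=
    (gma_integrable_sub_sq hv c).sub ((gma_integrable_sub hv c).const_mul _)
  rw [h, integral_add hf1 (integrable_const _),
    integral_sub (gma_integrable_sub_sq hv c) ((gma_integrable_sub hv c).const_mul _),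
    integral_const_mul, gma_integral_sub hv, gma_integral_sub_sq hv, integral_const]
  simp
  ring
section FinalIneq

theorem gma_final {m : ℝ} (hm : 2 ≤ m) (C : ℝ) (hC : 0 ≤ C) :
    C * (2 / m) ≤ C * Real.sqrt (2 * (1 + 1 / m) ^ 2 * Real.log (m / (m - 1))) := by
  have hm0 : (0:ℝ) < m := by linarith
  have hm1 : (0:ℝ) < m - 1 := by linarith
  refine mul_le_mul_of_nonneg_left ?_ hC
  have hlog : 1 / m ≤ Real.log (m / (m - 1)) := by
    have h1 : Real.log ((m - 1) / m) ≤ (m - 1) / m - 1 :=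
      Real.log_le_sub_one_of_pos (by positivity)
    have h2 : Real.log (m / (m - 1)) = -Real.log ((m - 1) / m) := by
      rw [← Real.log_inv]
      congr 1
      field_simp
    have h3 : (m - 1) / m - 1 = -(1 / m) := by field_simp; ring
    rw [h2]
    linarith [h1.trans_eq h3]
  rw [show (2 / m) = Real.sqrt ((2 * (1 / m)) ^ 2) by
    rw [Real.sqrt_sq (by positivity)]; ring]
  apply Real.sqrt_le_sqrt
  have hu : (0:ℝ) < 1 / m := by positivity
  have hsq : (0:ℝ) ≤ 2 * (1 + 1 / m) ^ 2 := by positivity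
  calc (2 * (1 / m)) ^ 2 ≤ 2 * (1 + 1 / m) ^ 2 * (1 / m) := by nlinarith [sq_nonneg (1/m), hu]
  _ ≤ 2 * (1 + 1 / m) ^ 2 * Real.log (m / (m - 1)) :=
      mul_le_mul_of_nonneg_left hlog hsq

end FinalIneq

open MeasureTheory ProbabilityTheory
open scoped ENNReal NNReal

theorem gaussian_mean_estimation_end_to_end_bound
    (d n K : ℕ) (hnK : 2 ≤ n * K)
    (μ0 : Fin d → ℝ) (σ : ℝ≥0) (hσ : 0 < σ) :
    ∫ s : Fin K → Fin n → Fin d → ℝ,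
        ((∫ z, ∑ j : Fin d,
              ((((n * K : ℕ) : ℝ)⁻¹ • ∑ k : Fin K, ∑ i : Fin n, s k i) j - z j) ^ 2
            ∂(Measure.pi fun j : Fin d => gaussianReal (μ0 j) (σ ^ 2)))
          - (1 / (n * K) : ℝ) * ∑ k : Fin K, ∑ i : Fin n, ∑ j : Fin d,
              ((((n * K : ℕ) : ℝ)⁻¹ • ∑ k' : Fin K, ∑ i' : Fin n, s k' i') j
                - s k i j) ^ 2)
        ∂(Measure.pi fun _ : Fin K => (Measure.pi fun _ : Fin n =>
          (Measure.pi fun j : Fin d => gaussianReal (μ0 j) (σ ^ 2))))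
      ≤ (σ : ℝ) ^ 2 * d *
        Real.sqrt (2 * (1 + 1 / (n * K : ℝ)) ^ 2 *
          Real.log ((n * K : ℝ) / ((n * K : ℝ) - 1))) := by
  classical
  have hv : (σ ^ 2 : ℝ≥0) ≠ 0 := pow_ne_zero _ (ne_of_gt hσ)
  set S := (Fin K → Fin n → Fin d → ℝ) with hS
  set νj : Fin d → Measure ℝ := fun j => gaussianReal (μ0 j) (σ ^ 2) with hνj
  set ν : Measure (Fin d → ℝ) := Measure.pi νj with hν
  set Pn : Measure (Fin n → Fin d → ℝ) := Measure.pi (fun _ : Fin n => ν) with hPn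
  set P : Measure S := Measure.pi (fun _ : Fin K => Pn) with hP
  haveI : ∀ j, IsProbabilityMeasure (νj j) := fun j => by
    rw [hνj]; infer_instance
  haveI hprobν : IsProbabilityMeasure ν := by rw [hν]; infer_instance
  haveI hprobPn : IsProbabilityMeasure Pn := by rw [hPn]; infer_instance
  haveI hprobP : IsProbabilityMeasure P := by rw [hP]; infer_instance
  set mR : ℝ := ((n * K : ℕ) : ℝ) with hmR
  have hm2 : (2:ℝ) ≤ mR := by rw [hmR]; exact_mod_cast hnK
  have hm0 : (0:ℝ) < mR := by linarith
  have hm0' : mR ≠ 0 := ne_of_gt hm0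
  have hσR : ((σ ^ 2 : ℝ≥0) : ℝ) = (σ:ℝ) ^ 2 := by push_cast; ring
  set X : (Fin K × Fin n) → Fin d → S → ℝ := fun a j s => s a.1 a.2 j - μ0 j with hX
  set T : Fin d → S → ℝ := fun j s => ∑ a : Fin K × Fin n, X a j s with hT
  -- measure preserving coordinate maps
  have mpK : ∀ k : Fin K, MeasurePreserving (fun s : S => s k) P Pn :=
    fun k => gma_mp_eval _ k
  have mpn : ∀ i : Fin n, MeasurePreserving (fun t : Fin n → Fin d → ℝ => t i) Pn ν :=
    fun i => gma_mp_eval _ i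
  have mpd : ∀ j : Fin d, MeasurePreserving (fun z : Fin d → ℝ => z j) ν (νj j) :=
    fun j => gma_mp_eval _ j
  have mpc : ∀ (a : Fin K × Fin n) (j : Fin d),
      MeasurePreserving (fun s : S => s a.1 a.2 j) P (νj j) :=
    fun a j => ((mpd j).comp ((mpn a.2).comp (mpK a.1)) : _)
  have mpp : ∀ (a b : Fin K × Fin n) (j j' : Fin d), (a, j) ≠ (b, j') →
      MeasurePreserving (fun s : S => (s a.1 a.2 j, s b.1 b.2 j')) P
        ((νj j).prod (νj j')) := by
    rintro ⟨k, i⟩ ⟨k', i'⟩ j j' hne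
    by_cases hk : k = k'
    · subst hk
      by_cases hi : i = i'
      · subst hi
        have hj : j ≠ j' := by
          intro h; exact hne (by rw [h])
        exact ((gma_mp_pair νj hj).comp ((mpn i).comp (mpK k)) : _)
      · exact (((mpd j).prod (mpd j')).comp
          ((gma_mp_pair (fun _ : Fin n => ν) hi).comp (mpK k)) : _)
    · exact ((((mpd j).comp (mpn i)).prod ((mpd j').comp (mpn i'))).comp
        (gma_mp_pair (fun _ : Fin K => Pn) hk) : _)
  -- integrability and moments of centered coordinates
  have hXXint : ∀ (a : Fin K × Fin n) (j : Fin d) (b : Fin K × Fin n) (j' : Fin d),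
      Integrable (fun s => X a j s * X b j' s) P := by
    intro a j b j'
    by_cases h : (a, j) = (b, j')
    · obtain ⟨h1, h2⟩ := Prod.mk.inj h
      subst h1; subst h2
      have hint := ((mpc a j).integrable_comp
        (((continuous_sub_right (μ0 j)).pow 2).aestronglyMeasurable)).mpr
        (gma_integrable_sub_sq hv (μ0 j))
      refine hint.congr (Filter.Eventually.of_forall fun s => ?_)
      simp only [hX, Function.comp, Pi.pow_apply]
      ring
    · have hg : Integrable (fun p : ℝ × ℝ => (p.1 - μ0 j) * (p.2 - μ0 j'))
          ((νj j).prod (νj j')) :=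
        (gma_integrable_sub hv (μ0 j)).mul_prod (gma_integrable_sub hv (μ0 j'))
      exact ((mpp a b j j' h).integrable_comp hg.aestronglyMeasurable).mpr hg
  have hXX : ∀ (a : Fin K × Fin n) (j : Fin d) (b : Fin K × Fin n) (j' : Fin d),
      ∫ s, X a j s * X b j' s ∂P = if (a, j) = (b, j') then (σ:ℝ)^2 else 0 := by
    intro a j b j'
    by_cases h : (a, j) = (b, j')
    · obtain ⟨h1, h2⟩ := Prod.mk.inj h
      subst h1; subst h2
      rw [if_pos rfl]
      have heq : (fun s => X a j s * X a j s)
          = fun s : S => (fun t : ℝ => (t - μ0 j) ^ 2) (s a.1 a.2 j) := by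
        funext s; simp only [hX]; ring
      rw [heq, gma_integral_comp (g := fun t : ℝ => (t - μ0 j) ^ 2) (mpc a j)
        (((continuous_sub_right (μ0 j)).pow 2).aestronglyMeasurable),
        gma_integral_sub_sq hv, hσR]
    · rw [if_neg h]
      have heq : (fun s => X a j s * X b j' s)
          = fun s : S => (fun p : ℝ × ℝ => (p.1 - μ0 j) * (p.2 - μ0 j'))
              (s a.1 a.2 j, s b.1 b.2 j') := rfl
      rw [heq, gma_integral_comp (g := fun p : ℝ × ℝ => (p.1 - μ0 j) * (p.2 - μ0 j')) (mpp a b j j' h)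
        (((continuous_fst.sub continuous_const).mul
          (continuous_snd.sub continuous_const)).aestronglyMeasurable),
        integral_prod_mul (f := fun t : ℝ => t - μ0 j) (g := fun t : ℝ => t - μ0 j'),
        gma_integral_sub hv, zero_mul]
  -- sums
  have hTXint : ∀ (j : Fin d) (b : Fin K × Fin n) (j' : Fin d),
      Integrable (fun s => T j s * X b j' s) P := by
    intro j b j'
    have heq : (fun s => T j s * X b j' s)
        = fun s => ∑ a : Fin K × Fin n, X a j s * X b j' s := by
      funext s; rw [hT]; rw [Finset.sum_mul]
    rw [heq]
    exact integrable_finset_sum _ (fun a _ => hXXint a j b j')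
  have hTX : ∀ (j : Fin d) (b : Fin K × Fin n), ∫ s, T j s * X b j s ∂P = (σ:ℝ)^2 := by
    intro j b
    have heq : (fun s => T j s * X b j s)
        = fun s => ∑ a : Fin K × Fin n, X a j s * X b j s := by
      funext s; rw [hT]; rw [Finset.sum_mul]
    rw [heq, integral_finset_sum _ (fun a _ => hXXint a j b j),
      Finset.sum_congr rfl (fun a _ => hXX a j b j)]
    have hcond : ∀ a : Fin K × Fin n,
        (if (a, j) = (b, j) then (σ:ℝ)^2 else 0) = if a = b then (σ:ℝ)^2 else 0 := by
      intro a; simp [Prod.ext_iff]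
    rw [Finset.sum_congr rfl (fun a _ => hcond a)]
    simp
  have hTTint : ∀ (j j' : Fin d), Integrable (fun s => T j s * T j' s) P := by
    intro j j'
    have heq : (fun s => T j s * T j' s)
        = fun s => ∑ a : Fin K × Fin n, ∑ b : Fin K × Fin n, X a j s * X b j' s := by
      funext s; rw [hT]; rw [Finset.sum_mul_sum]
    rw [heq]
    exact integrable_finset_sum _
      (fun a _ => integrable_finset_sum _ (fun b _ => hXXint a j b j'))
  have hTT : ∀ j : Fin d, ∫ s, T j s * T j s ∂P = mR * (σ:ℝ)^2 := by
    intro j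
    have heq : (fun s => T j s * T j s)
        = fun s => ∑ a : Fin K × Fin n, ∑ b : Fin K × Fin n, X a j s * X b j s := by
      funext s; rw [hT]; rw [Finset.sum_mul_sum]
    rw [heq, integral_finset_sum _
      (fun a _ => integrable_finset_sum _ (fun b _ => hXXint a j b j))]
    have hinner : ∀ a : Fin K × Fin n,
        ∑ b : Fin K × Fin n, ∫ s, X a j s * X b j s ∂P = (σ:ℝ)^2 := by
      intro a
      rw [Finset.sum_congr rfl (fun b _ => hXX a j b j)]
      have hcond : ∀ b : Fin K × Fin n,
          (if (a, j) = (b, j) then (σ:ℝ)^2 else 0) = if b = a then (σ:ℝ)^2 else 0 := by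
        intro b; simp [Prod.ext_iff, eq_comm (a := a)]
      rw [Finset.sum_congr rfl (fun b _ => hcond b)]
      simp
    have hinner' : ∀ a : Fin K × Fin n,
        ∫ s, ∑ b : Fin K × Fin n, X a j s * X b j s ∂P = (σ:ℝ)^2 := by
      intro a
      rw [integral_finset_sum _ (fun b _ => hXXint a j b j)]
      exact hinner a
    rw [Finset.sum_congr rfl fun a _ => hinner' a]
    rw [Finset.sum_const, Finset.card_univ, Fintype.card_prod, Fintype.card_fin,
      Fintype.card_fin, nsmul_eq_mul, hmR]
    push_cast
    ring
  -- rewriting the empirical mean deviations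
  have hgW : ∀ (s : S) (j : Fin d),
      (mR⁻¹ • ∑ k : Fin K, ∑ i : Fin n, s k i) j - μ0 j = mR⁻¹ * T j s := by
    intro s j
    have happ : (mR⁻¹ • ∑ k : Fin K, ∑ i : Fin n, s k i) j
        = mR⁻¹ * ∑ k : Fin K, ∑ i : Fin n, s k i j := by
      simp [Finset.sum_apply]
    have hTs : T j s = (∑ k : Fin K, ∑ i : Fin n, s k i j) - mR * μ0 j := by
      simp only [hT]
      rw [Fintype.sum_prod_type]
      simp only [hX]
      rw [show (∑ k : Fin K, ∑ i : Fin n, (s k i j - μ0 j))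
          = (∑ k : Fin K, ∑ i : Fin n, s k i j) - (K * n : ℕ) * μ0 j by
        simp [Finset.sum_sub_distrib, Finset.sum_const, Finset.card_univ, mul_assoc]
        try push_cast
        try ring]
      rw [hmR]
      push_cast
      ring
    rw [happ, hTs]
    field_simp
  have hgW2 : ∀ (s : S) (k : Fin K) (i : Fin n) (j : Fin d),
      (mR⁻¹ • ∑ k' : Fin K, ∑ i' : Fin n, s k' i') j - s k i j
        = mR⁻¹ * T j s - X (k, i) j s := by
    intro s k i j
    have h1 : (mR⁻¹ • ∑ k' : Fin K, ∑ i' : Fin n, s k' i') j - s k i j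
        = ((mR⁻¹ • ∑ k' : Fin K, ∑ i' : Fin n, s k' i') j - μ0 j) - (s k i j - μ0 j) := by
      ring
    rw [h1, hgW s j]
  -- inner integral over z
  have hInner : ∀ s : S,
      (∫ z, ∑ j : Fin d, ((mR⁻¹ • ∑ k : Fin K, ∑ i : Fin n, s k i) j - z j) ^ 2 ∂ν)
        = ∑ j : Fin d, ((mR⁻¹ * T j s) ^ 2 + (σ:ℝ)^2) := by
    intro s
    have hint : ∀ j : Fin d, Integrable
        (fun z : Fin d → ℝ => ((mR⁻¹ • ∑ k : Fin K, ∑ i : Fin n, s k i) j - z j) ^ 2) ν :=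
      fun j => ((mpd j).integrable_comp
        (((continuous_sub_left _).pow 2).aestronglyMeasurable)).mpr
        (gma_integrable_shift_sq hv _ _)
    rw [integral_finset_sum _ (fun j _ => hint j)]
    refine Finset.sum_congr rfl (fun j _ => ?_)
    rw [gma_integral_comp (g := fun t : ℝ => ((mR⁻¹ • ∑ k : Fin K, ∑ i : Fin n, s k i) j - t) ^ 2) (mpd j)
      (((continuous_sub_left _).pow 2).aestronglyMeasurable),
      gma_integral_shift_sq hv, hσR, hgW s j]
  -- integrability and values of all pieces
  have hsqint : ∀ j : Fin d, Integrable (fun s => (mR⁻¹ * T j s) ^ 2) P := by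
    intro j
    refine ((hTTint j j).const_mul (mR⁻¹ * mR⁻¹)).congr
      (Filter.Eventually.of_forall fun s => ?_)
    ring
  have hsqval : ∀ j : Fin d, ∫ s, (mR⁻¹ * T j s) ^ 2 ∂P = mR⁻¹ * (σ:ℝ)^2 := by
    intro j
    have heq : (fun s => (mR⁻¹ * T j s) ^ 2)
        = fun s => (mR⁻¹ * mR⁻¹) * (T j s * T j s) := by
      funext s; ring
    rw [heq, integral_const_mul, hTT j]
    field_simp
  have hBint : ∀ (k : Fin K) (i : Fin n) (j : Fin d),
      Integrable (fun s => (mR⁻¹ * T j s - X (k, i) j s) ^ 2) P := by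
    intro k i j
    have heq : (fun s => (mR⁻¹ * T j s - X (k, i) j s) ^ 2)
        = fun s => ((mR⁻¹ * mR⁻¹) * (T j s * T j s)
            - (2 * mR⁻¹) * (T j s * X (k, i) j s)) + X (k, i) j s * X (k, i) j s := by
      funext s; ring
    rw [heq]
    exact (((hTTint j j).const_mul _).sub ((hTXint j (k, i) j).const_mul _)).add
      (hXXint (k, i) j (k, i) j)
  have hBval : ∀ (k : Fin K) (i : Fin n) (j : Fin d),
      ∫ s, (mR⁻¹ * T j s - X (k, i) j s) ^ 2 ∂P = (1 - mR⁻¹) * (σ:ℝ)^2 := by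
    intro k i j
    have heq : (fun s => (mR⁻¹ * T j s - X (k, i) j s) ^ 2)
        = fun s => ((mR⁻¹ * mR⁻¹) * (T j s * T j s)
            - (2 * mR⁻¹) * (T j s * X (k, i) j s)) + X (k, i) j s * X (k, i) j s := by
      funext s; ring
    have hint1 : Integrable (fun s => (mR⁻¹ * mR⁻¹) * (T j s * T j s)
        - (2 * mR⁻¹) * (T j s * X (k, i) j s)) P :=
      ((hTTint j j).const_mul _).sub ((hTXint j (k, i) j).const_mul _)
    rw [heq, integral_add hint1 (hXXint (k, i) j (k, i) j),
      integral_sub ((hTTint j j).const_mul _) ((hTXint j (k, i) j).const_mul _),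
      integral_const_mul, integral_const_mul, hTT j, hTX j (k, i), hXX (k, i) j (k, i) j,
      if_pos rfl]
    field_simp
    ring
  have hIntA : Integrable (fun s => ∑ j : Fin d, ((mR⁻¹ * T j s) ^ 2 + (σ:ℝ)^2)) P :=
    integrable_finset_sum _ (fun j _ => (hsqint j).add (integrable_const _))
  have hIntB : Integrable (fun s => ∑ k : Fin K, ∑ i : Fin n, ∑ j : Fin d,
      (mR⁻¹ * T j s - X (k, i) j s) ^ 2) P :=
    integrable_finset_sum _ (fun k _ => integrable_finset_sum _
      (fun i _ => integrable_finset_sum _ (fun j _ => hBint k i j)))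
  have hAval : ∫ s, (∑ j : Fin d, ((mR⁻¹ * T j s) ^ 2 + (σ:ℝ)^2)) ∂P
      = d * (mR⁻¹ * (σ:ℝ)^2 + (σ:ℝ)^2) := by
    rw [integral_finset_sum (μ := P) Finset.univ
      (f := fun (j : Fin d) s => (mR⁻¹ * T j s) ^ 2 + (σ:ℝ)^2)
      (fun j _ => (hsqint j).add (integrable_const _))]
    have h1 : ∀ j : Fin d, ∫ s, ((mR⁻¹ * T j s) ^ 2 + (σ:ℝ)^2) ∂P
        = mR⁻¹ * (σ:ℝ)^2 + (σ:ℝ)^2 := by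
      intro j
      rw [integral_add (hsqint j) (integrable_const _), hsqval j, integral_const]
      simp
    rw [Finset.sum_congr rfl (fun j _ => h1 j), Finset.sum_const, Finset.card_univ,
      Fintype.card_fin, nsmul_eq_mul]
  have hBj : ∀ (k : Fin K) (i : Fin n),
      ∫ s, (∑ j : Fin d, (mR⁻¹ * T j s - X (k, i) j s) ^ 2) ∂P
        = d * ((1 - mR⁻¹) * (σ:ℝ)^2) := by
    intro k i
    rw [integral_finset_sum _ (fun j _ => hBint k i j),
      Finset.sum_congr rfl (fun j _ => hBval k i j), Finset.sum_const, Finset.card_univ,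
      Fintype.card_fin, nsmul_eq_mul]
  have hBi : ∀ k : Fin K,
      ∫ s, (∑ i : Fin n, ∑ j : Fin d, (mR⁻¹ * T j s - X (k, i) j s) ^ 2) ∂P
        = n * (d * ((1 - mR⁻¹) * (σ:ℝ)^2)) := by
    intro k
    rw [integral_finset_sum _ (fun i _ => integrable_finset_sum _ (fun j _ => hBint k i j)),
      Finset.sum_congr rfl (fun i _ => hBj k i), Finset.sum_const, Finset.card_univ,
      Fintype.card_fin, nsmul_eq_mul]
  have hBall : ∫ s, (∑ k : Fin K, ∑ i : Fin n, ∑ j : Fin d,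
      (mR⁻¹ * T j s - X (k, i) j s) ^ 2) ∂P = K * (n * (d * ((1 - mR⁻¹) * (σ:ℝ)^2))) := by
    rw [integral_finset_sum _ (fun k _ => integrable_finset_sum _
        (fun i _ => integrable_finset_sum _ (fun j _ => hBint k i j))),
      Finset.sum_congr rfl (fun k _ => hBi k), Finset.sum_const, Finset.card_univ,
      Fintype.card_fin, nsmul_eq_mul]
  -- rewrite the integrand
  have hfun : (fun s : S =>
      ((∫ z, ∑ j : Fin d, ((mR⁻¹ • ∑ k : Fin K, ∑ i : Fin n, s k i) j - z j) ^ 2 ∂ν)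
        - (1 / ((n:ℝ) * (K:ℝ))) * ∑ k : Fin K, ∑ i : Fin n, ∑ j : Fin d,
            ((mR⁻¹ • ∑ k' : Fin K, ∑ i' : Fin n, s k' i') j - s k i j) ^ 2))
      = fun s : S => (∑ j : Fin d, ((mR⁻¹ * T j s) ^ 2 + (σ:ℝ)^2))
          - mR⁻¹ * ∑ k : Fin K, ∑ i : Fin n, ∑ j : Fin d,
              (mR⁻¹ * T j s - X (k, i) j s) ^ 2 := by
    funext s
    rw [hInner s]
    congr 1
    · congr 1
      · rw [hmR]; push_cast; rw [one_div]
      · refine Finset.sum_congr rfl (fun k _ => ?_)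
        refine Finset.sum_congr rfl (fun i _ => ?_)
        refine Finset.sum_congr rfl (fun j _ => ?_)
        rw [hgW2 s k i j]
  rw [hfun, integral_sub hIntA (hIntB.const_mul mR⁻¹), integral_const_mul, hAval, hBall]
  have hKn : (K:ℝ) * (n:ℝ) = mR := by rw [hmR]; push_cast; ring
  have hval : (d:ℝ) * (mR⁻¹ * (σ:ℝ)^2 + (σ:ℝ)^2)
      - mR⁻¹ * ((K:ℝ) * ((n:ℝ) * ((d:ℝ) * ((1 - mR⁻¹) * (σ:ℝ)^2))))
      = (σ:ℝ)^2 * d * (2 / mR) := by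
    rw [show (K:ℝ) * ((n:ℝ) * ((d:ℝ) * ((1 - mR⁻¹) * (σ:ℝ)^2)))
        = ((K:ℝ) * (n:ℝ)) * ((d:ℝ) * ((1 - mR⁻¹) * (σ:ℝ)^2)) by ring, hKn]
    field_simp
    ring
  rw [hval]
  have hnK' : (n:ℝ) * (K:ℝ) = mR := by rw [hmR]; push_cast; ring
  rw [hnK']
  exact gma_final hm2 _ (by positivity)
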